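/- For all α, β > 0 and every real number u ≤ 0, the Laplace transform of the Bessel distribution satisfies ∫_{[0,∞)} e^{ux} m_{α,β}(dx) = exp(αu/(β − u)); in particular (taking u = 0), m_{α,β} is a probability measure. -/

import Mathlib

open MeasureTheory Filter Set
open scoped ENNReal

/-- The modified Bessel function of the first kind of order one,
`I₁(r) = (r/2) Σ_{k=0}^∞ (r²/4)^k / (k!(k+1)!)`. -/
noncomputable def besselI1 (r : ℝ) : ℝ :=
  r / 2 * ∑' k : ℕ, (r ^ 2 / 4) ^ k / ((Nat.factorial k : ℝ) * (Nat.factorial (k + 1) : ℝ))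

/-- The Bessel distribution `m_{α,β}` on `[0,∞)`:
`m_{α,β}(dx) = e^{−α} δ₀(dx) + β e^{−α−βx} √(α/(βx)) I₁(2√(αβx)) dx`. -/
noncomputable def besselMeasure (α β : ℝ) : Measure ℝ :=
  ENNReal.ofReal (Real.exp (-α)) • Measure.dirac (0 : ℝ) +
    MeasureTheory.volume.withDensity fun x =>
      ENNReal.ofReal (Set.indicator (Set.Ioi (0 : ℝ))
        (fun x => β * Real.exp (-α - β * x) * Real.sqrt (α / (β * x)) *
          besselI1 (2 * Real.sqrt (α * β * x))) x)

lemma bessel_summable (y : ℝ) :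
    Summable (fun k : ℕ => y ^ k / ((Nat.factorial k : ℝ) * (Nat.factorial (k + 1) : ℝ))) := by
  refine Summable.of_norm_bounded (Real.summable_pow_div_factorial |y|) (fun k => ?_)
  have h1 : (1 : ℝ) ≤ (Nat.factorial (k + 1) : ℝ) := by
    exact_mod_cast Nat.one_le_iff_ne_zero.2 (Nat.factorial_ne_zero _)
  have hk : (0 : ℝ) < (Nat.factorial k : ℝ) := Nat.cast_pos.2 (Nat.factorial_pos k)
  have hk1 : (0 : ℝ) < (Nat.factorial (k + 1) : ℝ) := Nat.cast_pos.2 (Nat.factorial_pos _)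
  rw [norm_div, norm_pow, Real.norm_eq_abs, Real.norm_eq_abs, abs_of_pos (mul_pos hk hk1)]
  refine div_le_div_of_nonneg_left (by positivity) hk ?_
  nlinarith

lemma besselI1_measurable : Measurable besselI1 := by
  unfold besselI1
  refine Measurable.mul (measurable_id.div_const 2) ?_
  refine measurable_of_tendsto_metrizable
    (f := fun n (r : ℝ) => ∑ k ∈ Finset.range n,
      (r ^ 2 / 4) ^ k / ((Nat.factorial k : ℝ) * (Nat.factorial (k + 1) : ℝ)))
    (fun n => ?_) (tendsto_pi_nhds.2 fun r => ?_)
  · exact Finset.measurable_sum _ fun k _ =>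
      (((measurable_id.pow_const 2).div_const 4).pow_const k).div_const _
  · exact (bessel_summable (r ^ 2 / 4)).hasSum.tendsto_sum_nat

lemma besselI1_nonneg {r : ℝ} (hr : 0 ≤ r) : 0 ≤ besselI1 r := by
  unfold besselI1
  refine mul_nonneg (by positivity) (tsum_nonneg fun k => by positivity)

lemma bessel_series_rep (α β u : ℝ) (hα : 0 < α) (hβ : 0 < β) {x : ℝ} (hx : 0 < x) :
    β * Real.exp (-α - β * x) * Real.sqrt (α / (β * x)) *
        besselI1 (2 * Real.sqrt (α * β * x)) * Real.exp (u * x) =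
      ∑' k : ℕ, (Real.exp (-α) * (α * β) ^ (k + 1) /
          ((Nat.factorial k : ℝ) * (Nat.factorial (k + 1) : ℝ))) *
        (x ^ k * Real.exp (-((β - u) * x))) := by
  have h0 : (0 : ℝ) ≤ α * β * x := by positivity
  have h2 : (2 * Real.sqrt (α * β * x)) ^ 2 / 4 = α * β * x := by
    rw [mul_pow, Real.sq_sqrt h0]; ring
  have h3 : Real.sqrt (α / (β * x)) * Real.sqrt (α * β * x) = α := by
    rw [← Real.sqrt_mul (by positivity)]
    have : α / (β * x) * (α * β * x) = α ^ 2 := by field_simp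
    rw [this, Real.sqrt_sq hα.le]
  have hexp : Real.exp (-α - β * x) * Real.exp (u * x) =
      Real.exp (-α) * Real.exp (-((β - u) * x)) := by
    rw [← Real.exp_add, ← Real.exp_add]; ring_nf
  unfold besselI1
  rw [h2]
  rw [show (2 : ℝ) * Real.sqrt (α * β * x) / 2 = Real.sqrt (α * β * x) by ring]
  have hL : β * Real.exp (-α - β * x) * Real.sqrt (α / (β * x)) *
      (Real.sqrt (α * β * x) * ∑' k : ℕ,
        (α * β * x) ^ k / ((Nat.factorial k : ℝ) * (Nat.factorial (k + 1) : ℝ))) *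
      Real.exp (u * x) =
      ∑' k : ℕ, (Real.sqrt (α / (β * x)) * Real.sqrt (α * β * x)) *
        (Real.exp (-α - β * x) * Real.exp (u * x)) * β *
        ((α * β * x) ^ k / ((Nat.factorial k : ℝ) * (Nat.factorial (k + 1) : ℝ))) := by
    rw [tsum_mul_left]
    try ring
  rw [hL]
  simp only [h3, hexp]
  exact tsum_congr fun k => by ring

set_option maxHeartbeats 800000 in
lemma bessel_lintegral (α β u : ℝ) (hα : 0 < α) (hβ : 0 < β) (hu : u ≤ 0) :
    ∫⁻ x, ENNReal.ofReal (Real.exp (u * x)) ∂ besselMeasure α β =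
      ENNReal.ofReal (Real.exp (α * u / (β - u))) := by
  have hr : 0 < β - u := by linarith
  set r : ℝ := β - u with hr_def
  set c : ℕ → ℝ := fun k => Real.exp (-α) * (α * β) ^ (k + 1) /
      ((Nat.factorial k : ℝ) * (Nat.factorial (k + 1) : ℝ)) with hc
  have hc_nonneg : ∀ k, 0 ≤ c k := fun k => by positivity
  have hF_nonneg : ∀ x ∈ Ioi (0:ℝ), 0 ≤ β * Real.exp (-α - β * x) * Real.sqrt (α / (β * x)) *
      besselI1 (2 * Real.sqrt (α * β * x)) := by
    intro x hx
    have hx : 0 < x := hx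
    refine mul_nonneg (by positivity) (besselI1_nonneg (by positivity))
  -- measurability of the density
  have hd : Measurable fun x : ℝ =>
      ENNReal.ofReal (Set.indicator (Set.Ioi (0 : ℝ))
        (fun x => β * Real.exp (-α - β * x) * Real.sqrt (α / (β * x)) *
          besselI1 (2 * Real.sqrt (α * β * x))) x) := by
    refine ENNReal.measurable_ofReal.comp (Measurable.indicator ?_ measurableSet_Ioi)
    have : Measurable fun x : ℝ => Real.sqrt (α / (β * x)) := by
      exact Real.continuous_sqrt.measurable.comp
        ((measurable_const.mul measurable_id).const_div α)
    exact ((measurable_const.mul (Real.measurable_exp.comp (by fun_prop))).mul this).mul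
      (besselI1_measurable.comp (by fun_prop))
  have hg : Measurable fun x : ℝ => ENNReal.ofReal (Real.exp (u * x)) := by fun_prop
  rw [besselMeasure, lintegral_add_measure, lintegral_smul_measure, lintegral_dirac,
    lintegral_withDensity_eq_lintegral_mul _ hd hg]
  -- continuous part
  have key : ∫⁻ x, ((fun x : ℝ =>
      ENNReal.ofReal (Set.indicator (Set.Ioi (0 : ℝ))
        (fun x => β * Real.exp (-α - β * x) * Real.sqrt (α / (β * x)) *
          besselI1 (2 * Real.sqrt (α * β * x))) x)) *
      (fun x => ENNReal.ofReal (Real.exp (u * x)))) x ∂volume =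
      ∑' k : ℕ, ENNReal.ofReal (c k * (Nat.factorial k / r ^ (k + 1))) := by
    have hrw : ∀ x : ℝ, ((fun x : ℝ =>
        ENNReal.ofReal (Set.indicator (Set.Ioi (0 : ℝ))
          (fun x => β * Real.exp (-α - β * x) * Real.sqrt (α / (β * x)) *
            besselI1 (2 * Real.sqrt (α * β * x))) x)) *
        (fun x => ENNReal.ofReal (Real.exp (u * x)))) x =
        Set.indicator (Set.Ioi (0 : ℝ)) (fun x =>
          ENNReal.ofReal ((β * Real.exp (-α - β * x) * Real.sqrt (α / (β * x)) *
            besselI1 (2 * Real.sqrt (α * β * x))) * Real.exp (u * x))) x := by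
      intro x
      by_cases hx : x ∈ Ioi (0:ℝ)
      · simp only [Pi.mul_apply, Set.indicator_of_mem hx]
        rw [ENNReal.ofReal_mul (hF_nonneg x hx)]
      · simp [Set.indicator_of_notMem hx]
    simp only [hrw]
    rw [lintegral_indicator measurableSet_Ioi]
    have hpt : ∀ x ∈ Ioi (0:ℝ),
        ENNReal.ofReal ((β * Real.exp (-α - β * x) * Real.sqrt (α / (β * x)) *
            besselI1 (2 * Real.sqrt (α * β * x))) * Real.exp (u * x)) =
        ∑' k : ℕ, ENNReal.ofReal (c k * (x ^ k * Real.exp (-(r * x)))) := by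
      intro x hx
      have hx' : (0:ℝ) < x := hx
      rw [bessel_series_rep α β u hα hβ hx]
      refine ENNReal.ofReal_tsum_of_nonneg (fun k => by positivity) ?_
      have hsum : Summable (fun k : ℕ => (α * β * x) ^ k /
          ((Nat.factorial k : ℝ) * (Nat.factorial (k + 1) : ℝ))) := bessel_summable _
      have : ∀ k : ℕ, c k * (x ^ k * Real.exp (-((β - u) * x))) =
          (Real.exp (-α) * (α * β) * Real.exp (-((β - u) * x))) *
            ((α * β * x) ^ k / ((Nat.factorial k : ℝ) * (Nat.factorial (k + 1) : ℝ))) := by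
        intro k
        simp only [hc]
        rw [mul_pow, mul_pow]
        ring
      exact (hsum.mul_left _).congr fun k => (this k).symm
    rw [setLIntegral_congr_fun measurableSet_Ioi hpt]
    have hmeas : ∀ k : ℕ, Measurable fun x : ℝ =>
        ENNReal.ofReal (c k * (x ^ k * Real.exp (-(r * x)))) := by
      intro k
      apply Measurable.ennreal_ofReal
      exact ((measurable_id.pow_const k).mul
        (Real.measurable_exp.comp ((measurable_const.mul measurable_id).neg))).const_mul _
    rw [lintegral_tsum (fun k => (hmeas k).aemeasurable)]
    refine tsum_congr fun k => ?_
    -- compute each integral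
    have hint : IntegrableOn (fun x : ℝ => x ^ k * Real.exp (-(r * x))) (Ioi 0) := by
      have := integrableOn_rpow_mul_exp_neg_mul_rpow (p := 1) (s := (k : ℝ)) (b := r)
        ((by norm_num : (-1:ℝ) < 0).trans_le (Nat.cast_nonneg k)) one_pos hr
      refine this.congr_fun (fun x hx => ?_) measurableSet_Ioi
      simp only [Real.rpow_one, Real.rpow_natCast, neg_mul]
    have hval : ∫ x in Ioi (0:ℝ), x ^ k * Real.exp (-(r * x)) =
        Nat.factorial k / r ^ (k + 1) := by
      have h := Real.integral_rpow_mul_exp_neg_mul_Ioi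
        (a := (k : ℝ) + 1) (by positivity) hr
      rw [add_sub_cancel_right] at h
      have heq : ∫ x in Ioi (0:ℝ), x ^ k * Real.exp (-(r * x)) =
          ∫ x in Ioi (0:ℝ), x ^ (k : ℝ) * Real.exp (-(r * x)) := by
        refine setIntegral_congr_fun measurableSet_Ioi fun x hx => ?_
        rw [Real.rpow_natCast]
      have hpow : (1 / r) ^ ((k : ℝ) + 1) = (1 / r) ^ (k + 1) := by
        rw [← Real.rpow_natCast (1 / r) (k + 1)]; norm_num
      rw [heq, h, hpow, Real.Gamma_nat_eq_factorial, one_div, inv_pow]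
      ring
    rw [← hval, ← integral_const_mul]
    refine (ofReal_integral_eq_lintegral_ofReal (hint.const_mul (c k)) ?_).symm
    refine (ae_restrict_iff' measurableSet_Ioi).2 (Filter.Eventually.of_forall fun x hx => ?_)
    have hx' : (0:ℝ) < x := hx
    positivity
  rw [key]
  -- sum the series
  set t : ℝ := α * β / r with ht
  have ht_pos : 0 < t := by positivity
  have hterm : ∀ k : ℕ, c k * (Nat.factorial k / r ^ (k + 1)) =
      Real.exp (-α) * (t ^ (k + 1) / (Nat.factorial (k + 1))) := by
    intro k
    have hk : (Nat.factorial k : ℝ) ≠ 0 := Nat.cast_ne_zero.2 (Nat.factorial_ne_zero _)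
    have hk1 : (Nat.factorial (k + 1) : ℝ) ≠ 0 := Nat.cast_ne_zero.2 (Nat.factorial_ne_zero _)
    simp only [hc, ht, div_pow]
    field_simp
  simp only [hterm]
  have hsum1 : Summable (fun k : ℕ => t ^ (k + 1) / (Nat.factorial (k + 1) : ℝ)) :=
    (summable_nat_add_iff 1).2 (Real.summable_pow_div_factorial t)
  have htsum : ∑' k : ℕ, t ^ (k + 1) / (Nat.factorial (k + 1) : ℝ) = Real.exp t - 1 := by
    have hexp : Real.exp t = ∑' n : ℕ, t ^ n / (Nat.factorial n : ℝ) := by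
      rw [Real.exp_eq_exp_ℝ, NormedSpace.exp_eq_tsum_div]
    have := Summable.tsum_eq_zero_add (f := fun n : ℕ => t ^ n / (Nat.factorial n : ℝ))
      (Real.summable_pow_div_factorial t)
    simp only [pow_zero, Nat.factorial_zero, Nat.cast_one, div_one] at this
    rw [hexp, this]; ring
  rw [← ENNReal.ofReal_tsum_of_nonneg (fun k => by positivity) (hsum1.mul_left _),
    tsum_mul_left, htsum]
  have h1 : (0:ℝ) ≤ Real.exp (-α) * (Real.exp t - 1) := by
    have : (1:ℝ) ≤ Real.exp t := by
      rw [← Real.exp_zero]; exact Real.exp_le_exp.2 ht_pos.le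
    nlinarith [Real.exp_pos (-α)]
  simp only [mul_zero, Real.exp_zero, ENNReal.ofReal_one, mul_one, smul_eq_mul]
  rw [← ENNReal.ofReal_add (Real.exp_nonneg (-α)) h1]
  congr 1
  have : Real.exp (-α) + Real.exp (-α) * (Real.exp t - 1) = Real.exp (-α) * Real.exp t := by
    ring
  rw [this, ← Real.exp_add]
  congr 1
  have hr0 : r ≠ 0 := ne_of_gt hr
  rw [ht, hr_def]
  field_simp [show β - u ≠ 0 from hr0]
  ring

theorem bessel_laplace_transform (α β : ℝ) (hα : 0 < α) (hβ : 0 < β) :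
    IsProbabilityMeasure (besselMeasure α β) ∧
      ∀ u : ℝ, u ≤ 0 →
        ∫ x, Real.exp (u * x) ∂ besselMeasure α β = Real.exp (α * u / (β - u)) := by
  have hprob : IsProbabilityMeasure (besselMeasure α β) := by
    constructor
    have h := bessel_lintegral α β 0 hα hβ le_rfl
    simp only [zero_mul, Real.exp_zero, ENNReal.ofReal_one, mul_zero, zero_div] at h
    rw [← lintegral_one]
    exact h
  refine ⟨hprob, fun u hu => ?_⟩
  have hcont : Continuous fun x : ℝ => Real.exp (u * x) := by fun_prop
  have hmeas : AEStronglyMeasurable (fun x : ℝ => Real.exp (u * x)) (besselMeasure α β) :=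
    hcont.aestronglyMeasurable
  rw [integral_eq_lintegral_of_nonneg_ae
    (Filter.Eventually.of_forall fun x => (Real.exp_pos _).le) hmeas,
    bessel_lintegral α β u hα hβ hu, ENNReal.toReal_ofReal (Real.exp_nonneg _)]
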